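/- Let r_c = exp(-π/√3) and let b : (0, r_c) → (0, 1/6) be any function such that for every r ∈ (0, r_c) one has -3·b(r)·log(r) + log(2·sin(π(1/6 - b(r)))) = 0. Then b(r) → 1/6 as r → 0⁺. -/

import Mathlib

open Filter Topology

/-- If `b` maps each `r ∈ (0, r_c)` (with `r_c = exp(-π/√3)`) into `(0, 1/6)`
and satisfies `-3·b(r)·log r + log(2·sin(π(1/6 - b(r)))) = 0` there, then
`b(r) → 1/6` as `r → 0⁺`. -/
theorem beta_tendsto_one_sixth
    (b : ℝ → ℝ)
    (hb : ∀ r ∈ Set.Ioo (0 : ℝ) (Real.exp (-Real.pi / Real.sqrt 3)),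
      b r ∈ Set.Ioo (0 : ℝ) (1/6) ∧
      -3 * b r * Real.log r + Real.log (2 * Real.sin (Real.pi * (1/6 - b r))) = 0) :
    Tendsto b (𝓝[>] (0 : ℝ)) (𝓝 (1/6)) := by
  rw [Metric.tendsto_nhds]
  intro ε hε
  have hδ : (0:ℝ) < min (Real.exp (-Real.pi / Real.sqrt 3)) (Real.exp (-1/(3*ε))) :=
    lt_min (Real.exp_pos _) (Real.exp_pos _)
  filter_upwards [Ioo_mem_nhdsGT_of_mem
    (show (0:ℝ) ∈ Set.Ico (0:ℝ)
      (min (Real.exp (-Real.pi / Real.sqrt 3)) (Real.exp (-1/(3*ε)))) from ⟨le_refl _, hδ⟩)]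
    with r hr
  obtain ⟨hr0, hrlt⟩ := hr
  obtain ⟨hr1, hr2⟩ := lt_min_iff.mp hrlt
  obtain ⟨⟨hb0, hb16⟩, heq⟩ := hb r ⟨hr0, hr1⟩
  have hlogr : Real.log r < -1/(3*ε) := (Real.log_lt_iff_lt_exp hr0).mpr hr2
  have key : 1/6 - ε < b r := by
    by_contra h
    push_neg at h
    have hεlt : 6 * ε ≤ 1 - 6 * b r := by linarith
    have ht0 : 0 < 1 - 6 * b r := by linarith
    have ht1 : 1 - 6 * b r ≤ 1 := by linarith
    -- chord bound for sin via concavity on [0, π]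
    have hπ : (0:ℝ) < Real.pi := Real.pi_pos
    have hmem0 : (0:ℝ) ∈ Set.Icc (0:ℝ) Real.pi := ⟨le_refl _, le_of_lt hπ⟩
    have hmem1 : Real.pi/6 ∈ Set.Icc (0:ℝ) Real.pi := ⟨by positivity, by linarith⟩
    have hconc := strictConcaveOn_sin_Icc.concaveOn.2 hmem0 hmem1
      (show (0:ℝ) ≤ 6 * b r by linarith)
      (show (0:ℝ) ≤ 1 - 6 * b r by linarith)
      (by ring)
    simp only [smul_eq_mul, Real.sin_zero, mul_zero, zero_add] at hconc
    have hxeq : (1 - 6 * b r) * (Real.pi/6) = Real.pi * (1/6 - b r) := by ring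
    rw [hxeq, Real.sin_pi_div_six] at hconc
    have hsin : 1 - 6 * b r ≤ 2 * Real.sin (Real.pi * (1/6 - b r)) := by linarith
    have hsinpos : 0 < 2 * Real.sin (Real.pi * (1/6 - b r)) := lt_of_lt_of_le ht0 hsin
    have hlog1 : Real.log (1 - 6 * b r) ≤ Real.log (2 * Real.sin (Real.pi * (1/6 - b r))) :=
      Real.log_le_log ht0 hsin
    have hlog2 : -Real.log (1 - 6 * b r) ≤ (1 - 6 * b r)⁻¹ - 1 := by
      have := Real.log_le_sub_one_of_pos (show 0 < (1 - 6 * b r)⁻¹ by positivity)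
      rwa [Real.log_inv] at this
    have hinv : (1 - 6 * b r)⁻¹ ≤ (6 * ε)⁻¹ := by
      apply inv_anti₀ (by positivity) hεlt
    have hlb : -(b r / ε) ≤ Real.log (2 * Real.sin (Real.pi * (1/6 - b r))) := by
      have h1 : (1 - 6 * b r)⁻¹ - 1 ≤ b r / ε := by
        have heqq : (1 - 6 * b r)⁻¹ - 1 = 6 * b r / (1 - 6 * b r) := by
          field_simp
          ring
        rw [heqq, div_le_div_iff₀ ht0 hε]
        nlinarith [hεlt, hb0.le]
      linarith [hlog1, hlog2]
    -- the equation: log(2 sin ...) = 3 b log r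
    have heq' : Real.log (2 * Real.sin (Real.pi * (1/6 - b r))) = 3 * b r * Real.log r := by
      linarith
    have : 3 * b r * Real.log r < -(b r / ε) := by
      have h2 : 3 * b r * Real.log r < 3 * b r * (-1/(3*ε)) := by
        apply mul_lt_mul_of_pos_left hlogr (by linarith)
      have h3 : 3 * b r * (-1/(3*ε)) = -(b r / ε) := by
        field_simp
      linarith
    linarith [hlb, heq', this]
  rw [Real.dist_eq, abs_lt]
  constructor <;> linarith
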